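/- arXiv:1204.3422 — 2 statements merged into one kernel-verified Lean document; each statement's English description precedes it below -/
import Mathlib

section
/- A vector x = (x_{ij})_{1 ≤ i < j ≤ d} in ℝ^{d(d-1)/2} is a common fixed point of all matrices B_ω (over all arbitrage rules ω = (i,j,k)) if and only if x_{ij} = -x_{1i} + x_{1j} for all 2 ≤ i < j ≤ d. In particular, the subspace of common fixed points has dimension d - 1. -/
open Matrix

/-- Index type for the coordinates of `ℝ^{d(d-1)/2}`: pairs `(i,j)` with `i < j`. -/
abbrev Pr (d : ℕ) := {p : Fin d × Fin d // p.1 < p.2}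

/-- The pair `(i,j)` with `i < j` as an element of `Pr d`. -/
def pr {d : ℕ} {i j : Fin d} (h : i < j) : Pr d := ⟨(i, j), h⟩

/-- `Eb p q = e_p e_q^T`, the matrix with a single `1` in position `(p,q)`. -/
noncomputable def Eb {d : ℕ} (p q : Pr d) : Matrix (Pr d) (Pr d) ℝ :=
  Matrix.single p q 1

/-- The matrix `B_ω` for the arbitrage rule `ω = (i,j,k)`, `i < j`, `k ≠ i,j`. -/
noncomputable def Bmat {d : ℕ} (i j k : Fin d) (hij : i < j) (hki : k ≠ i) (hkj : k ≠ j) :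
    Matrix (Pr d) (Pr d) ℝ :=
  if h1 : k < i then
    -- case k < i < j : B = I - e_{ij}(e_{ij}^T + e_{ki}^T - e_{kj}^T)
    1 - Eb (pr hij) (pr hij) - Eb (pr hij) (pr h1) + Eb (pr hij) (pr (h1.trans hij))
  else if h2 : k < j then
    -- case i < k < j : B = I - e_{ij}(e_{ij}^T - e_{ik}^T - e_{kj}^T)
    1 - Eb (pr hij) (pr hij) + Eb (pr hij) (pr (lt_of_le_of_ne (not_lt.1 h1) (Ne.symm hki)))
      + Eb (pr hij) (pr h2)
  else
    -- case i < j < k : B = I - e_{ij}(e_{ij}^T - e_{ik}^T + e_{jk}^T)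
    1 - Eb (pr hij) (pr hij)
      + Eb (pr hij) (pr (hij.trans (lt_of_le_of_ne (not_lt.1 h2) (Ne.symm hkj))))
      - Eb (pr hij) (pr (lt_of_le_of_ne (not_lt.1 h2) (Ne.symm hkj)))

/-- The subspace of common fixed points of all the matrices `B_ω`. -/
def FixSubmodule (d : ℕ) : Submodule ℝ (Pr d → ℝ) where
  carrier := {x | ∀ (i j k : Fin d) (hij : i < j) (hki : k ≠ i) (hkj : k ≠ j),
      (Bmat i j k hij hki hkj).mulVec x = x}
  add_mem' := by
    intro a b ha hb i j k hij hki hkj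
    rw [Matrix.mulVec_add, ha i j k hij hki hkj, hb i j k hij hki hkj]
  zero_mem' := by
    intro i j k hij hki hkj
    rw [Matrix.mulVec_zero]
  smul_mem' := by
    intro c x hx i j k hij hki hkj
    rw [Matrix.mulVec_smul, hx i j k hij hki hkj]

set_option linter.unnecessarySeqFocus false
set_option linter.unusedSectionVars false

lemma Eb_mulVec {d : ℕ} (p q : Pr d) (x : Pr d → ℝ) (r : Pr d) :
    (Eb p q).mulVec x r = if r = p then x q else 0 := by
  rw [Eb, Matrix.single_mulVec]
  by_cases h : r = p <;> simp [h, Function.update]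

lemma key1 {d : ℕ} (p q1 q2 : Pr d) (x : Pr d → ℝ) :
    (1 - Eb p p - Eb p q1 + Eb p q2).mulVec x = x ↔ x p = x q2 - x q1 := by
  constructor
  · intro h
    have := congrFun h p
    simp [Matrix.add_mulVec, Matrix.sub_mulVec, Matrix.one_mulVec, Eb_mulVec] at this
    linarith
  · intro h
    funext r
    simp only [Matrix.add_mulVec, Matrix.sub_mulVec, Matrix.one_mulVec]
    by_cases hr : r = p <;> simp [hr, Eb_mulVec] <;> linarith

lemma key2 {d : ℕ} (p q1 q2 : Pr d) (x : Pr d → ℝ) :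
    (1 - Eb p p + Eb p q1 + Eb p q2).mulVec x = x ↔ x p = x q1 + x q2 := by
  constructor
  · intro h
    have := congrFun h p
    simp [Matrix.add_mulVec, Matrix.sub_mulVec, Matrix.one_mulVec, Eb_mulVec] at this
    linarith
  · intro h
    funext r
    simp only [Matrix.add_mulVec, Matrix.sub_mulVec, Matrix.one_mulVec]
    by_cases hr : r = p <;> simp [hr, Eb_mulVec] <;> linarith

lemma key3 {d : ℕ} (p q1 q2 : Pr d) (x : Pr d → ℝ) :
    (1 - Eb p p + Eb p q1 - Eb p q2).mulVec x = x ↔ x p = x q1 - x q2 := by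
  constructor
  · intro h
    have := congrFun h p
    simp [Matrix.add_mulVec, Matrix.sub_mulVec, Matrix.one_mulVec, Eb_mulVec] at this
    linarith
  · intro h
    funext r
    simp only [Matrix.add_mulVec, Matrix.sub_mulVec, Matrix.one_mulVec]
    by_cases hr : r = p <;> simp [hr, Eb_mulVec] <;> linarith

lemma fix_iff_cond3 {d : ℕ} (x : Pr d → ℝ) :
    (∀ (i j k : Fin d) (hij : i < j) (hki : k ≠ i) (hkj : k ≠ j),
      (Bmat i j k hij hki hkj).mulVec x = x) ↔
    (∀ (a b c : Fin d) (hab : a < b) (hbc : b < c),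
      x (pr hbc) = x (pr (hab.trans hbc)) - x (pr hab)) := by
  constructor
  · intro h a b c hab hbc
    have := h b c a hbc hab.ne (hab.trans hbc).ne
    rw [Bmat, dif_pos hab, key1] at this
    exact this
  · intro h i j k hij hki hkj
    rw [Bmat]
    split_ifs with h1 h2
    · rw [key1]; exact h k i j h1 hij
    · rw [key2]
      have hik : i < k := lt_of_le_of_ne (not_lt.1 h1) (Ne.symm hki)
      have := h i k j hik h2
      linarith
    · rw [key3]
      have hjk : j < k := lt_of_le_of_ne (not_lt.1 h2) (Ne.symm hkj)
      have := h i j k hij hjk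
      linarith

lemma fin_pos_of_ne_zero {d : ℕ} [NeZero d] {a : Fin d} (ha : a ≠ 0) : (0 : Fin d) < a := by
  rw [Fin.lt_def, Fin.val_zero]
  rcases Nat.eq_zero_or_pos a.val with h | h
  · exact absurd (Fin.ext (by simp [h])) ha
  · exact h

lemma fix_iff_char {d : ℕ} [NeZero d] (x : Pr d → ℝ) :
    (∀ (i j k : Fin d) (hij : i < j) (hki : k ≠ i) (hkj : k ≠ j),
      (Bmat i j k hij hki hkj).mulVec x = x) ↔
    (∀ (i j : Fin d) (h0i : (0 : Fin d) < i) (hij : i < j),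
      x (pr hij) = -x (pr h0i) + x (pr (h0i.trans hij))) := by
  rw [fix_iff_cond3]
  constructor
  · intro h i j h0i hij
    have := h 0 i j h0i hij
    linarith
  · intro h a b c hab hbc
    by_cases ha : a = 0
    · subst ha
      have := h b c hab hbc
      linarith
    · have h0a : (0 : Fin d) < a := fin_pos_of_ne_zero ha
      have h1 := h a b h0a hab
      have h2 := h a c h0a (hab.trans hbc)
      have h3 := h b c (h0a.trans hab) hbc
      rw [show pr ((h0a.trans hab).trans hbc) = pr (h0a.trans (hab.trans hbc)) from rfl] at h3
      linarith

section
variable {d : ℕ} [NeZero d]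

/-- Extension of `y : Fin (d-1) → ℝ` to `Fin d`, with value `0` at `0`. -/
noncomputable def gext (y : Fin (d-1) → ℝ) (i : Fin d) : ℝ :=
  if h : i.val = 0 then 0 else y ⟨i.val - 1, by omega⟩

lemma gext_zero (y : Fin (d-1) → ℝ) : gext y (0 : Fin d) = 0 := by
  simp [gext]

lemma gext_pos (y : Fin (d-1) → ℝ) (i : Fin d) (h : (0:Fin d) < i) :
    gext y i = y ⟨i.val - 1, by have := i.isLt; have : 0 < i.val := h; omega⟩ := by
  have h0 : i.val ≠ 0 := by have : (0:Fin d).val < i.val := h; omega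
  simp [gext, h0]

noncomputable def Fmap : (Fin (d-1) → ℝ) →ₗ[ℝ] (Pr d → ℝ) where
  toFun y p := gext y p.1.2 - gext y p.1.1
  map_add' y z := by
    funext p
    simp only [gext, Pi.add_apply]
    split_ifs <;> ring
  map_smul' c y := by
    funext p
    simp only [gext, Pi.smul_apply, smul_eq_mul, RingHom.id_apply]
    split_ifs <;> ring

lemma Fmap_apply (y : Fin (d-1) → ℝ) {i j : Fin d} (h : i < j) :
    Fmap y (pr h) = gext y j - gext y i := rfl

lemma Fmap_inj : Function.Injective (Fmap (d := d)) := by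
  rw [injective_iff_map_eq_zero]
  intro y hy
  funext i
  have hlt : (0 : Fin d) < ⟨i.val + 1, by omega⟩ := by
    rw [Fin.lt_def]; simp
  have := congrFun hy (pr hlt)
  rw [Fmap_apply, gext_zero, gext_pos _ _ hlt] at this
  simpa using this

/-- Candidate preimage coordinates. -/
noncomputable def yvec (x : Pr d → ℝ) (i : Fin (d-1)) : ℝ :=
  x (pr (show (0 : Fin d) < ⟨i.val + 1, by omega⟩ by rw [Fin.lt_def]; simp))

lemma yvec_eq (x : Pr d → ℝ) (b : Fin d) (hb : (0:Fin d) < b) {h : b.val - 1 < d - 1} :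
    yvec x ⟨b.val - 1, h⟩ = x (pr hb) := by
  rw [yvec]
  congr 1
  simp only [pr]
  apply Subtype.ext
  apply Prod.ext
  · rfl
  · apply Fin.ext
    have : 0 < b.val := hb
    simp only [Fin.val_mk]
    omega

lemma Fmap_range : LinearMap.range (Fmap (d := d)) = FixSubmodule d := by
  ext x
  constructor
  · rintro ⟨y, rfl⟩
    show ∀ (i j k : Fin d) (hij : i < j) (hki : k ≠ i) (hkj : k ≠ j),
      (Bmat i j k hij hki hkj).mulVec (Fmap y) = Fmap y
    rw [fix_iff_char]
    intro i j h0i hij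
    rw [Fmap_apply, Fmap_apply, Fmap_apply]
    ring
  · intro hx
    have hx' : ∀ (i j k : Fin d) (hij : i < j) (hki : k ≠ i) (hkj : k ≠ j),
        (Bmat i j k hij hki hkj).mulVec x = x := hx
    rw [fix_iff_char] at hx'
    have hgy : ∀ (b : Fin d) (hb : (0:Fin d) < b), gext (yvec x) b = x (pr hb) := by
      intro b hb
      rw [gext_pos _ _ hb]
      exact yvec_eq x b hb
    refine ⟨yvec x, ?_⟩
    funext p
    obtain ⟨⟨a, b⟩, hab⟩ := p
    show gext (yvec x) b - gext (yvec x) a = x ⟨(a, b), hab⟩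
    by_cases ha : a = 0
    · subst ha
      rw [hgy b hab, gext_zero]
      simp [pr]
    · have h0a : (0 : Fin d) < a := fin_pos_of_ne_zero ha
      rw [hgy b (h0a.trans hab), hgy a h0a]
      have := hx' a b h0a hab
      have hxp : x (⟨(a, b), hab⟩ : Pr d) = x (pr hab) := rfl
      rw [hxp]
      linarith

end

theorem common_fixed_points (d : ℕ) [NeZero d] (hd : 3 ≤ d) :
    (∀ x : Pr d → ℝ,
      (∀ (i j k : Fin d) (hij : i < j) (hki : k ≠ i) (hkj : k ≠ j),
          (Bmat i j k hij hki hkj).mulVec x = x)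
        ↔ ∀ (i j : Fin d) (h0i : (0 : Fin d) < i) (hij : i < j),
            x (pr hij) = -x (pr h0i) + x (pr (h0i.trans hij)))
    ∧ Module.finrank ℝ (FixSubmodule d) = d - 1 := by
  constructor
  · intro x
    exact fix_iff_char x
  · rw [← Fmap_range, LinearMap.finrank_range_of_inj Fmap_inj]
    simp [Module.finrank_fin_fun]
end

section
/- For every arbitrage rule ω = (i,j,k) with 1 < k < i < j, the matrix B_ω = I - e_{ij}(e_{ij}^T + e_{ki}^T - e_{kj}^T) commutes with the change of basis in the sense that Q^{-1} B_ω Q = B_ω, where Q = I + Σ_{2 ≤ m < n ≤ d} e_{mn}(e_{1n}^T - e_{1m}^T). -/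
open Matrix

/-- `Q = I + Σ_{2 ≤ i < j ≤ d} e_{ij}(e_{1j}^T - e_{1i}^T)`. -/
noncomputable def Qmat (d : ℕ) [NeZero d] : Matrix (Pr d) (Pr d) ℝ :=
  1 + ∑ p : Pr d,
    if h : (0 : Fin d) < p.1.1 then Eb p (pr (h.trans p.2)) - Eb p (pr h) else 0

/-- `Q⁻¹ = I - Σ_{2 ≤ i < j ≤ d} e_{ij}(e_{1j}^T - e_{1i}^T)`. -/
noncomputable def Qinv (d : ℕ) [NeZero d] : Matrix (Pr d) (Pr d) ℝ :=
  1 - ∑ p : Pr d,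
    if h : (0 : Fin d) < p.1.1 then Eb p (pr (h.trans p.2)) - Eb p (pr h) else 0

/-- The correction part of `Qmat`/`Qinv`. -/
noncomputable def Smat (d : ℕ) [NeZero d] : Matrix (Pr d) (Pr d) ℝ :=
  ∑ p : Pr d,
    if h : (0 : Fin d) < p.1.1 then Eb p (pr (h.trans p.2)) - Eb p (pr h) else 0

lemma Eb_mul_Eb {d : ℕ} (p q r s : Pr d) :
    Eb p q * Eb r s = if q = r then Eb p s else 0 := by
  unfold Eb
  split
  · subst ‹q = r›
    rw [Matrix.single_mul_single_same, one_mul]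
  · exact Matrix.single_mul_single_of_ne (c := (1:ℝ)) (i := p) (h := ‹q ≠ r›) (d := 1)

lemma Smat_mul_Eb {d : ℕ} [NeZero d] (p q : Pr d) (hp : p.1.1 ≠ (0 : Fin d)) :
    Smat d * Eb p q = 0 := by
  unfold Smat
  rw [Finset.sum_mul]
  refine Finset.sum_eq_zero fun r _ => ?_
  split
  · rw [sub_mul, Eb_mul_Eb, Eb_mul_Eb,
      if_neg (fun he => hp (congrArg (fun x : Pr d => x.1.1) he.symm)),
      if_neg (fun he => hp (congrArg (fun x : Pr d => x.1.1) he.symm)), sub_zero]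
  · simp

lemma Eb_mul_Smat {d : ℕ} [NeZero d] (p q : Pr d) (hq : (0 : Fin d) < q.1.1) :
    Eb p q * Smat d = Eb p (pr (hq.trans q.2)) - Eb p (pr hq) := by
  unfold Smat
  rw [Finset.mul_sum, Finset.sum_eq_single q]
  · rw [dif_pos hq, mul_sub, Eb_mul_Eb, Eb_mul_Eb, if_pos rfl, if_pos rfl]
  · intro r _ hr
    split
    · rw [mul_sub, Eb_mul_Eb, Eb_mul_Eb, if_neg (Ne.symm hr), if_neg (Ne.symm hr),
        sub_zero]
    · simp
  · simp

lemma Eb_mul_Smat_zero {d : ℕ} [NeZero d] (p q : Pr d) (hq : q.1.1 = (0 : Fin d)) :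
    Eb p q * Smat d = 0 := by
  unfold Smat
  rw [Finset.mul_sum]
  refine Finset.sum_eq_zero fun r _ => ?_
  split
  · rename_i h
    have hne : q ≠ r := by
      intro he; rw [← he, hq] at h; exact lt_irrefl _ h
    rw [mul_sub, Eb_mul_Eb, Eb_mul_Eb, if_neg hne, if_neg hne, sub_zero]
  · simp

lemma Smat_sq {d : ℕ} [NeZero d] : Smat d * Smat d = 0 := by
  conv_lhs => rw [show Smat d * Smat d
    = (∑ p : Pr d, if h : (0 : Fin d) < p.1.1
        then Eb p (pr (h.trans p.2)) - Eb p (pr h) else 0) * Smat d from rfl]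
  rw [Finset.sum_mul]
  refine Finset.sum_eq_zero fun r _ => ?_
  split
  · rw [sub_mul, Eb_mul_Smat_zero _ _ rfl, Eb_mul_Smat_zero _ _ rfl, sub_zero]
  · simp

theorem conj_case_one_lt_k (d : ℕ) [NeZero d] (hd : 4 ≤ d)
    (k i j : Fin d) (h0k : (0 : Fin d) < k) (hki : k < i) (hij : i < j) :
    Qinv d * Bmat i j k hij hki.ne (hki.trans hij).ne * Qmat d
      = Bmat i j k hij hki.ne (hki.trans hij).ne := by
  have hi : (0 : Fin d) < i := h0k.trans hki
  have hj : (0 : Fin d) < j := hi.trans hij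
  rw [show Qinv d = 1 - Smat d from rfl, show Qmat d = 1 + Smat d from rfl,
      Bmat, dif_pos hki]
  set S := Smat d with hS
  set B : Matrix (Pr d) (Pr d) ℝ :=
    1 - Eb (pr hij) (pr hij) - Eb (pr hij) (pr hki) + Eb (pr hij) (pr (hki.trans hij))
    with hB
  have hSE : ∀ q : Pr d, S * Eb (pr hij) q = 0 := fun q => Smat_mul_Eb _ _ hi.ne'
  have h1 : S * B = S := by
    rw [hB, mul_add, mul_sub, mul_sub, mul_one, hSE, hSE, hSE, sub_zero, sub_zero,
      add_zero]
  have hE1S : Eb (pr hij) (pr hij) * S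
      = Eb (pr hij) (pr hj) - Eb (pr hij) (pr hi) := Eb_mul_Smat _ _ hi
  have hE2S : Eb (pr hij) (pr hki) * S
      = Eb (pr hij) (pr hi) - Eb (pr hij) (pr h0k) := Eb_mul_Smat _ _ h0k
  have hE3S : Eb (pr hij) (pr (hki.trans hij)) * S
      = Eb (pr hij) (pr hj) - Eb (pr hij) (pr h0k) := Eb_mul_Smat _ _ h0k
  have h2 : B * S = S := by
    rw [hB, add_mul, sub_mul, sub_mul, one_mul, hE1S, hE2S, hE3S]
    abel
  rw [sub_mul, one_mul, h1, sub_mul, mul_add, mul_one, mul_add, mul_one, h2,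
    show S * S = (0 : Matrix (Pr d) (Pr d) ℝ) from Smat_sq]
  abel
end
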